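/- Let G be a countable group, m ≥ 1 and f ∈ ℤ[G] semi-lopsided with f = m − Σ_{s∈S} aₛ s where S is finite, 1 ∉ S, aₛ > 0 and Σₛ aₛ = m. Suppose ξ ∈ c₀(G, ℝ) satisfies ξ * f = δ₁ (ξ is a c₀ formal right inverse). Then for every α ∈ ℤ[G] there exist β, c ∈ ℤ[G] with α = β + c·f and β̂(g) ∈ {−m, …, m−1} for every g ∈ G; moreover β, c can be chosen so that whenever β̂(g) = −m, one has β̂(gs⁻¹) < 0 for every s ∈ S. -/

import Mathlib

/-- let `f = m − Σ_{s∈S} aₛ s ∈ ℤ[G]` be semi-lopsided with `1 ∉ S`,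
`aₛ > 0` and `Σₛ aₛ = m ≥ 1`, and suppose `ξ ∈ c₀(G, ℝ)` is a `c₀` formal right
inverse of `f` (`ξ * f = δ₁`). Then every `α ∈ ℤ[G]` can be written `α = β + c·f`
with `β̂(g) ∈ {−m, …, m−1}` for all `g`, and moreover `β, c` may be chosen so that
whenever `β̂(g) = −m` one has `β̂(gs⁻¹) < 0` for all `s ∈ S`. -/
theorem semi_lopsided_coefficient_reduction
    {G : Type*} [Group G] [Countable G] [DecidableEq G]
    (S : Finset G) (hS : (1 : G) ∉ S)
    (a : G → ℤ) (ha : ∀ s ∈ S, 0 < a s)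
    (m : ℤ) (hm1 : 1 ≤ m) (hmsum : m = ∑ s ∈ S, a s)
    (f : MonoidAlgebra ℤ G)
    (hf : f = MonoidAlgebra.single (1 : G) m - ∑ s ∈ S, MonoidAlgebra.single s (a s))
    (ξ : G → ℝ)
    (hc0 : ∀ ε : ℝ, 0 < ε → {g : G | ε ≤ |ξ g|}.Finite)
    (hinv : ∀ g : G, (∑' h : G, ξ (g * h⁻¹) * ((f.coeff h : ℤ) : ℝ)) =
      (if g = 1 then (1 : ℝ) else 0)) :
    ∀ α : MonoidAlgebra ℤ G, ∃ β c : MonoidAlgebra ℤ G,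
      α = β + c * f ∧
      (∀ g : G, -m ≤ β.coeff g ∧ β.coeff g ≤ m - 1) ∧
      (∀ g : G, β.coeff g = -m → ∀ s ∈ S, β.coeff (g * s⁻¹) < 0) := by
  classical
  intro α
  have hSne : S.Nonempty := by
    rcases Finset.eq_empty_or_nonempty S with h | h
    · exfalso; rw [h, Finset.sum_empty] at hmsum; omega
    · exact h
  have hmR : (0:ℝ) < (m:ℝ) := by exact_mod_cast (by omega : (0:ℤ) < m)
  -- coefficients of f
  have hfc : ∀ h : G, f.coeff h = (if h = 1 then m else 0) - (if h ∈ S then a h else 0) := by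
    intro h
    rw [hf, MonoidAlgebra.coeff_sub, Finsupp.sub_apply]
    congr 1
    · rw [MonoidAlgebra.coeff_single, Finsupp.single_apply]
      simp [eq_comm]
    · rw [MonoidAlgebra.coeff_sum, Finset.sum_apply']
      simp only [MonoidAlgebra.coeff_single, Finsupp.single_apply]
      exact Finset.sum_ite_eq' S h a
  -- key convolution identity from hinv
  have key : ∀ g : G, (m : ℝ) * ξ g - ∑ s ∈ S, (a s : ℝ) * ξ (g * s⁻¹)
      = (if g = 1 then (1:ℝ) else 0) := by
    intro g
    rw [← hinv g, tsum_eq_sum (s := insert (1:G) S) ?_]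
    · rw [Finset.sum_insert hS]
      have e1 : ξ (g * 1⁻¹) * ((f.coeff 1 : ℤ) : ℝ) = (m:ℝ) * ξ g := by
        rw [hfc]; simp [hS]; ring
      have e2 : ∀ s ∈ S, ξ (g * s⁻¹) * ((f.coeff s : ℤ):ℝ) = -((a s : ℝ) * ξ (g * s⁻¹)) := by
        intro s hs
        have hs1 : s ≠ 1 := fun h => hS (h ▸ hs)
        rw [hfc]; simp [hs1, hs]; ring
      rw [e1, Finset.sum_congr rfl e2, Finset.sum_neg_distrib]
      ring
    · intro h hh
      simp only [Finset.mem_insert, not_or] at hh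
      have : f.coeff h = 0 := by rw [hfc]; simp [hh.1, hh.2]
      rw [this]; simp
  -- the c0 function y = α * ξ
  set T := α.coeff.support with hT
  set y : G → ℝ := fun g => ∑ h ∈ T, (α.coeff h : ℝ) * ξ (h⁻¹ * g) with hy
  have hαy : ∀ g : G, (m:ℝ) * y g - ∑ s ∈ S, (a s:ℝ) * y (g * s⁻¹) = (α.coeff g : ℝ) := by
    intro g
    have swap : ∑ s ∈ S, (a s:ℝ) * y (g * s⁻¹)
        = ∑ h ∈ T, (α.coeff h : ℝ) * ∑ s ∈ S, (a s : ℝ) * ξ (h⁻¹ * g * s⁻¹) := by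
      simp only [hy, Finset.mul_sum]
      rw [Finset.sum_comm]
      apply Finset.sum_congr rfl; intro h _
      apply Finset.sum_congr rfl; intro s _
      rw [mul_assoc]; ring
    rw [swap, hy, Finset.mul_sum, ← Finset.sum_sub_distrib]
    have step : ∀ h ∈ T, (m:ℝ) * ((α.coeff h:ℝ) * ξ (h⁻¹ * g))
        - (α.coeff h:ℝ) * ∑ s ∈ S, (a s:ℝ) * ξ (h⁻¹ * g * s⁻¹)
        = (α.coeff h : ℝ) * (if h⁻¹ * g = 1 then 1 else 0) := by
      intro h _
      rw [← key (h⁻¹ * g), mul_sub]; ring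
    rw [Finset.sum_congr rfl step]
    simp only [inv_mul_eq_one, mul_ite, mul_one, mul_zero]
    rw [Finset.sum_ite_eq' T g]
    by_cases hg : g ∈ T
    · simp [hg]
    · simp [hg, Finsupp.notMem_support_iff.mp hg]
  -- finiteness of the half-level set of y
  have hyfin : {g : G | (1:ℝ)/2 ≤ |y g|}.Finite := by
    rcases Finset.eq_empty_or_nonempty T with hTe | hTne
    · have : ∀ g, y g = 0 := by intro g; simp [hy, hTe]
      have : {g : G | (1:ℝ)/2 ≤ |y g|} = ∅ := by
        ext g; simp [this g]
      rw [this]; exact Set.finite_empty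
    · set A : ℝ := ∑ h ∈ T, |(α.coeff h : ℝ)| with hA
      have hApos : 0 < A := by
        apply Finset.sum_pos _ hTne
        intro h hh
        have : α.coeff h ≠ 0 := Finsupp.mem_support_iff.mp hh
        have : (α.coeff h : ℝ) ≠ 0 := by exact_mod_cast this
        exact abs_pos.mpr this
      have hεpos : 0 < 1/(2*A) := by positivity
      have hsub : {g : G | (1:ℝ)/2 ≤ |y g|}
          ⊆ ⋃ h ∈ (T : Set G), {g : G | 1/(2*A) ≤ |ξ (h⁻¹ * g)|} := by
        intro g hg
        by_contra hng
        simp only [Set.mem_iUnion, Set.mem_setOf_eq, not_exists, not_le] at hng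
        have hb : |y g| < 1/2 := by
          calc |y g| ≤ ∑ h ∈ T, |(α.coeff h : ℝ) * ξ (h⁻¹ * g)| := Finset.abs_sum_le_sum_abs _ _
            _ = ∑ h ∈ T, |(α.coeff h : ℝ)| * |ξ (h⁻¹ * g)| := by
                apply Finset.sum_congr rfl; intro h _; rw [abs_mul]
            _ < ∑ h ∈ T, |(α.coeff h : ℝ)| * (1/(2*A)) := by
                apply Finset.sum_lt_sum_of_nonempty hTne
                intro h hh
                have : α.coeff h ≠ 0 := Finsupp.mem_support_iff.mp hh
                have h1 : (0:ℝ) < |(α.coeff h : ℝ)| := abs_pos.mpr (by exact_mod_cast this)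
                exact mul_lt_mul_of_pos_left (hng h hh) h1
            _ = A * (1/(2*A)) := by rw [← Finset.sum_mul]
            _ = 1/2 := by field_simp
        exact absurd hg (by simp only [Set.mem_setOf_eq, not_le]; linarith)
      apply Set.Finite.subset _ hsub
      apply Set.Finite.biUnion T.finite_toSet
      intro h _
      have : {g : G | 1/(2*A) ≤ |ξ (h⁻¹ * g)|}
          = (fun g => h⁻¹ * g) ⁻¹' {u : G | 1/(2*A) ≤ |ξ u|} := rfl
      rw [this]
      exact Set.Finite.preimage ((mul_right_injective h⁻¹).injOn) (hc0 _ hεpos)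
  -- the integer rounding
  set cf : G → ℤ := fun g => ⌊y g + 1/2⌋ with hcfdef
  have hcf0 : ∀ g, ¬ ((1:ℝ)/2 ≤ |y g|) → cf g = 0 := by
    intro g hg
    push_neg at hg
    have hg' := abs_lt.mp hg
    simp only [hcfdef]
    rw [Int.floor_eq_zero_iff]
    exact ⟨by simp; linarith [hg'.1], by simp; linarith [hg'.2]⟩
  have hx : ∀ g, -(1/2:ℝ) ≤ y g - (cf g : ℝ) ∧ y g - (cf g : ℝ) < 1/2 := by
    intro g
    have h1 := Int.floor_le (y g + 1/2)
    have h2 := Int.lt_floor_add_one (y g + 1/2)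
    have hc : (cf g : ℝ) = (⌊y g + 1/2⌋ : ℝ) := rfl
    rw [hc]
    exact ⟨by linarith, by linarith⟩
  -- define c
  set F : Finset G := hyfin.toFinset with hF
  set c : MonoidAlgebra ℤ G := ∑ g ∈ F, MonoidAlgebra.single g (cf g) with hc
  have hcapp : ∀ g, c.coeff g = cf g := by
    intro g
    rw [hc, MonoidAlgebra.coeff_sum, Finset.sum_apply']
    simp only [MonoidAlgebra.coeff_single, Finsupp.single_apply]
    rw [Finset.sum_ite_eq' F g cf]
    by_cases hg : g ∈ F
    · simp [hg]
    · have : ¬ ((1:ℝ)/2 ≤ |y g|) := by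
        intro hcon
        exact hg (by rw [hF]; exact hyfin.mem_toFinset.mpr hcon)
      simp [hg, hcf0 g this]
  have hcfapp : ∀ g, (c * f).coeff g = c.coeff g * m - ∑ s ∈ S, c.coeff (g * s⁻¹) * a s := by
    intro g
    rw [hf, mul_sub, MonoidAlgebra.coeff_sub, Finsupp.sub_apply, Finset.mul_sum, MonoidAlgebra.coeff_sum, Finset.sum_apply',
      MonoidAlgebra.coeff_mul_single_apply]
    rw [inv_one, mul_one]
    congr 1
    apply Finset.sum_congr rfl
    intro s _
    rw [MonoidAlgebra.coeff_mul_single_apply]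
  -- define β
  set β : MonoidAlgebra ℤ G := α - c * f with hβ
  have hβr : ∀ g : G, (β.coeff g : ℝ)
      = (m:ℝ) * (y g - (cf g : ℝ)) - ∑ s ∈ S, (a s:ℝ) * (y (g*s⁻¹) - (cf (g*s⁻¹) : ℝ)) := by
    intro g
    have h1 : β.coeff g = α.coeff g - (c.coeff g * m - ∑ s ∈ S, c.coeff (g*s⁻¹) * a s) := by
      rw [hβ, MonoidAlgebra.coeff_sub, Finsupp.sub_apply, hcfapp]
    rw [h1]
    push_cast
    rw [← hαy g]
    simp only [hcapp]
    have h2 : ∑ s ∈ S, ((cf (g*s⁻¹) : ℝ)) * (a s:ℝ) = ∑ s ∈ S, (a s:ℝ) * (cf (g*s⁻¹):ℝ) :=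
      Finset.sum_congr rfl (fun s _ => mul_comm _ _)
    rw [h2]
    simp only [mul_sub]
    rw [Finset.sum_sub_distrib]
    ring
  have hsumhalf : ∑ s ∈ S, (a s:ℝ) * (1/2) = (m:ℝ) * (1/2) := by
    rw [← Finset.sum_mul]
    congr 1
    rw [hmsum]; push_cast; ring
  have hub : ∀ g : G, (β.coeff g : ℝ) < (m:ℝ) := by
    intro g
    rw [hβr g]
    have h1 : (m:ℝ) * (y g - (cf g:ℝ)) < (m:ℝ) * (1/2) :=
      mul_lt_mul_of_pos_left (hx g).2 hmR
    have h2 : ∑ s ∈ S, (a s:ℝ) * (-(1/2)) ≤ ∑ s ∈ S, (a s:ℝ) * (y (g*s⁻¹) - (cf (g*s⁻¹):ℝ)) := by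
      apply Finset.sum_le_sum
      intro s hs
      have has : (0:ℝ) < (a s:ℝ) := by exact_mod_cast ha s hs
      exact mul_le_mul_of_nonneg_left (hx (g*s⁻¹)).1 has.le
    have h3 : ∑ s ∈ S, (a s:ℝ) * (-(1/2)) = -((m:ℝ) * (1/2)) := by
      have : ∀ s ∈ S, (a s:ℝ) * (-(1/2)) = -((a s:ℝ) * (1/2)) := by intro s _; ring
      rw [Finset.sum_congr rfl this, Finset.sum_neg_distrib, hsumhalf]
    linarith
  have hlb : ∀ g : G, -(m:ℝ) < (β.coeff g : ℝ) := by
    intro g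
    rw [hβr g]
    have h1 : (m:ℝ) * (-(1/2)) ≤ (m:ℝ) * (y g - (cf g:ℝ)) :=
      mul_le_mul_of_nonneg_left (hx g).1 hmR.le
    have h2 : ∑ s ∈ S, (a s:ℝ) * (y (g*s⁻¹) - (cf (g*s⁻¹):ℝ)) < ∑ s ∈ S, (a s:ℝ) * (1/2) := by
      apply Finset.sum_lt_sum_of_nonempty hSne
      intro s hs
      have has : (0:ℝ) < (a s:ℝ) := by exact_mod_cast ha s hs
      exact mul_lt_mul_of_pos_left (hx (g*s⁻¹)).2 has
    rw [hsumhalf] at h2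
    linarith
  have hblt : ∀ g, β.coeff g < m := by
    intro g; exact_mod_cast hub g
  have hbgt : ∀ g, -m < β.coeff g := by
    intro g
    have := hlb g
    exact_mod_cast (by push_cast; exact this : ((-m : ℤ):ℝ) < ((β.coeff g : ℤ):ℝ))
  refine ⟨β, c, ?_, ?_, ?_⟩
  · rw [hβ, sub_add_cancel]
  · intro g
    exact ⟨(hbgt g).le, by have := hblt g; omega⟩
  · intro g hg
    exfalso
    have := hbgt g
    omega
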